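/- arXiv:1404.0357 — 3 statements merged into one kernel-verified Lean document; each statement's English description precedes it below -/
import Mathlib

section
/- Let E be a module over L⁰ and let U ⊆ E be L⁰-convex, L⁰-absorbent, L⁰-balanced and closed under countable concatenations. For X ∈ E suppose c ∈ L⁰ is a greatest lower bound (in the a.e. order) of the set {Y ∈ L⁰₊ : X ∈ Y•U}. Then: (i) if c < 1 a.e. then X ∈ U; (ii) if X ∈ U then c ≤ 1 a.e. In other words, {X ∈ E : p_U(X) < 1} ⊆ U ⊆ {X ∈ E : p_U(X) ≤ 1}. -/
open MeasureTheory Filter Pointwise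

variable {Ω : Type*} [MeasurableSpace Ω] (P : MeasureTheory.Measure Ω ) [IsProbabilityMeasure P]

noncomputable instance : CommRing (Ω →ₘ[P] ℝ) :=
  { (inferInstance : AddCommGroup (Ω →ₘ[P] ℝ)),
    (inferInstance : CommMonoid (Ω →ₘ[P] ℝ)) with
    left_distrib := fun f g h => AEEqFun.ext (by
      filter_upwards [AEEqFun.coeFn_mul f (g + h), AEEqFun.coeFn_add g h,
        AEEqFun.coeFn_add (f * g) (f * h), AEEqFun.coeFn_mul f g, AEEqFun.coeFn_mul f h]
        with ω h1 h2 h3 h4 h5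
      simp only [Pi.mul_apply, Pi.add_apply] at *
      rw [h1, h2, h3, h4, h5, mul_add])
    right_distrib := fun f g h => AEEqFun.ext (by
      filter_upwards [AEEqFun.coeFn_mul (f + g) h, AEEqFun.coeFn_add f g,
        AEEqFun.coeFn_add (f * h) (g * h), AEEqFun.coeFn_mul f h, AEEqFun.coeFn_mul g h]
        with ω h1 h2 h3 h4 h5
      simp only [Pi.mul_apply, Pi.add_apply] at *
      rw [h1, h2, h3, h4, h5, add_mul])
    zero_mul := fun f => AEEqFun.ext (by
      filter_upwards [AEEqFun.coeFn_mul 0 f, AEEqFun.coeFn_zero (β := ℝ) (μ := P)]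
        with ω h1 h2
      simp only [Pi.mul_apply, Pi.zero_apply] at *
      rw [h1, h2, zero_mul])
    mul_zero := fun f => AEEqFun.ext (by
      filter_upwards [AEEqFun.coeFn_mul f 0, AEEqFun.coeFn_zero (β := ℝ) (μ := P)]
        with ω h1 h2
      simp only [Pi.mul_apply, Pi.zero_apply] at *
      rw [h1, h2, mul_zero]) }

/-- `L⁰₊₊`: the set of a.e. strictly positive elements. -/
def L0pp (Y : Ω →ₘ[P] ℝ) : Prop := ∀ᵐ ω ∂P, 0 < Y ω

/-- The equivalence class of the indicator function of a measurable set. -/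
noncomputable def ind (A : Set Ω) (hA : MeasurableSet A) : Ω →ₘ[P] ℝ :=
  AEEqFun.mk (A.indicator fun _ => (1 : ℝ)) (aestronglyMeasurable_const.indicator hA)

section ModuleDefs

variable {E : Type*} [AddCommGroup E] [Module (Ω →ₘ[P] ℝ) E]

/-- `L⁰`-convexity of a subset of an `L⁰`-module. -/
def IsL0Convex (U : Set E) : Prop :=
  ∀ X₁ ∈ U, ∀ X₂ ∈ U, ∀ Y : Ω →ₘ[P] ℝ, 0 ≤ Y → Y ≤ 1 → Y • X₁ + (1 - Y) • X₂ ∈ U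

/-- `L⁰`-absorbency of a subset of an `L⁰`-module. -/
def IsL0Absorbent (U : Set E) : Prop :=
  ∀ X : E, ∃ Y : Ω →ₘ[P] ℝ, L0pp P Y ∧ X ∈ Y • U

/-- `L⁰`-balancedness of a subset of an `L⁰`-module. -/
def IsL0Balanced (U : Set E) : Prop :=
  ∀ X ∈ U, ∀ Y : Ω →ₘ[P] ℝ, |Y| ≤ 1 → Y • X ∈ U

/-- Closedness under countable concatenations. -/
def IsConcatClosed (C : Set E) : Prop :=
  ∀ (A : ℕ → Set Ω) (hA : ∀ n, MeasurableSet (A n)),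
    Pairwise (Function.onFun Disjoint A) → (⋃ n, A n) = Set.univ →
    ∀ X : E, (∀ n, ∃ Xn ∈ C, ind P (A n) (hA n) • X = ind P (A n) (hA n) • Xn) → X ∈ C

/-- `L⁰`-seminorm. -/
def IsL0Seminorm (p : E → (Ω →ₘ[P] ℝ)) : Prop :=
  (∀ X : E, 0 ≤ p X) ∧ (∀ (Y : Ω →ₘ[P] ℝ) (X : E), p (Y • X) = |Y| * p X) ∧
    (∀ X₁ X₂ : E, p (X₁ + X₂) ≤ p X₁ + p X₂)

/-- The set whose essential infimum is the gauge `p_K(X)`. -/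
def gaugeSet (K : Set E) (X : E) : Set (Ω →ₘ[P] ℝ) :=
  {Y : Ω →ₘ[P] ℝ | 0 ≤ Y ∧ X ∈ Y • K}

end ModuleDefs


section Helpers

variable {Ω : Type*} [MeasurableSpace Ω] {P : MeasureTheory.Measure Ω} [IsProbabilityMeasure P]
variable {E : Type*} [AddCommGroup E] [Module (Ω →ₘ[P] ℝ) E]

lemma ind_coe (A : Set Ω) (hA : MeasurableSet A) :
    ⇑(ind P A hA) =ᵐ[P] A.indicator (fun _ => (1:ℝ)) := AEEqFun.coeFn_mk _ _

lemma ind_mul_self (A : Set Ω) (hA : MeasurableSet A) :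
    ind P A hA * ind P A hA = ind P A hA := by
  refine AEEqFun.ext ?_
  filter_upwards [AEEqFun.coeFn_mul (ind P A hA) (ind P A hA), ind_coe A hA] with ω h1 h2
  simp only [Pi.mul_apply] at h1
  rw [h1, h2]
  by_cases h : ω ∈ A <;> simp [h]

lemma le_ae {Y Z : Ω →ₘ[P] ℝ} (h : Y ≤ Z) : ∀ᵐ ω ∂P, Y ω ≤ Z ω :=
  AEEqFun.coeFn_le.mpr h

lemma nonneg_ae {Y : Ω →ₘ[P] ℝ} (h : 0 ≤ Y) : ∀ᵐ ω ∂P, 0 ≤ Y ω := by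
  filter_upwards [le_ae h, AEEqFun.coeFn_zero (β := ℝ) (μ := P)] with ω h1 h2
  rw [h2] at h1; exact h1

lemma ae_nonneg_le {Y Z : Ω →ₘ[P] ℝ} (h : ∀ᵐ ω ∂P, Y ω ≤ Z ω) : Y ≤ Z :=
  AEEqFun.coeFn_le.mp h

lemma min_mem_gaugeSet {U : Set E} (hconv : IsL0Convex P U) {X : E} {Y₁ Y₂ : Ω →ₘ[P] ℝ}
    (h₁ : Y₁ ∈ gaugeSet P U X) (h₂ : Y₂ ∈ gaugeSet P U X) :
    ∃ W ∈ gaugeSet P U X, ∀ᵐ ω ∂P, W ω = min (Y₁ ω) (Y₂ ω) := by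
  obtain ⟨hY₁0, hXY₁⟩ := h₁
  obtain ⟨hY₂0, hXY₂⟩ := h₂
  obtain ⟨u₁, hu₁, hX₁⟩ := Set.mem_smul_set.mp hXY₁
  obtain ⟨u₂, hu₂, hX₂⟩ := Set.mem_smul_set.mp hXY₂
  set A : Set Ω := {ω | Y₁ ω ≤ Y₂ ω} with hAdef
  have hA : MeasurableSet A := measurableSet_le Y₁.measurable Y₂.measurable
  set e : Ω →ₘ[P] ℝ := ind P A hA with hedef
  have he0 : (0:Ω →ₘ[P] ℝ) ≤ e := by
    rw [← AEEqFun.coeFn_le]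
    filter_upwards [AEEqFun.coeFn_zero (β := ℝ) (μ := P), ind_coe A hA] with ω h1 h2
    rw [h1, h2]
    by_cases h : ω ∈ A <;> simp [h]
  have he1 : e ≤ 1 := by
    rw [← AEEqFun.coeFn_le]
    filter_upwards [AEEqFun.coeFn_one (β := ℝ) (μ := P), ind_coe A hA] with ω h1 h2
    rw [h1, h2]
    by_cases h : ω ∈ A <;> simp [h]
  set W : Ω →ₘ[P] ℝ := e * Y₁ + (1 - e) * Y₂ with hWdef
  have hWmin : ∀ᵐ ω ∂P, W ω = min (Y₁ ω) (Y₂ ω) := by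
    filter_upwards [AEEqFun.coeFn_add (e * Y₁) ((1 - e) * Y₂), AEEqFun.coeFn_mul e Y₁,
      AEEqFun.coeFn_mul (1 - e) Y₂, AEEqFun.coeFn_sub (1 : Ω →ₘ[P] ℝ) e,
      AEEqFun.coeFn_one (β := ℝ) (μ := P), ind_coe A hA] with ω h1 h2 h3 h4 h5 h6
    show W ω = _
    rw [hWdef]
    simp only [Pi.mul_apply, Pi.add_apply, Pi.sub_apply, Pi.one_apply] at h1 h2 h3 h4
    rw [h1, h2, h3, h4, h5, h6]
    by_cases h : ω ∈ A
    · have hle : Y₁ ω ≤ Y₂ ω := h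
      simp [h, min_eq_left hle]
    · have hle : Y₂ ω ≤ Y₁ ω := le_of_not_ge h
      simp [h, min_eq_right hle]
  have hW0 : (0:Ω →ₘ[P] ℝ) ≤ W := by
    apply ae_nonneg_le
    filter_upwards [hWmin, nonneg_ae hY₁0, nonneg_ae hY₂0,
      AEEqFun.coeFn_zero (β := ℝ) (μ := P)] with ω h1 h2 h3 h4
    rw [h4, h1]
    exact le_min h2 h3
  have hee : e * e = e := ind_mul_self A hA
  have h1 : W * e = e * Y₁ := by rw [hWdef]; linear_combination (Y₁ - Y₂) * hee
  have h2 : W * (1 - e) = (1 - e) * Y₂ := by rw [hWdef]; linear_combination (Y₂ - Y₁) * hee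
  refine ⟨W, ⟨hW0, ?_⟩, hWmin⟩
  refine Set.mem_smul_set.mpr ⟨e • u₁ + (1 - e) • u₂, hconv u₁ hu₁ u₂ hu₂ e he0 he1, ?_⟩
  calc W • (e • u₁ + (1 - e) • u₂)
      = (W * e) • u₁ + (W * (1 - e)) • u₂ := by rw [smul_add, smul_smul, smul_smul]
    _ = (e * Y₁) • u₁ + ((1 - e) * Y₂) • u₂ := by rw [h1, h2]
    _ = e • (Y₁ • u₁) + (1 - e) • (Y₂ • u₂) := by rw [mul_smul, mul_smul]
    _ = e • X + (1 - e) • X := by rw [hX₁, hX₂]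
    _ = X := by rw [← add_smul, add_sub_cancel, one_smul]

end Helpers

/-- `{X : p_U(X) < 1} ⊆ U ⊆ {X : p_U(X) ≤ 1}` for a concatenation-closed
`L⁰`-convex, `L⁰`-absorbent, `L⁰`-balanced set `U`. -/
theorem stmt_3 {Ω : Type*} [MeasurableSpace Ω] (P : MeasureTheory.Measure Ω)
    [IsProbabilityMeasure P]
    {E : Type*} [AddCommGroup E] [Module (Ω →ₘ[P] ℝ) E]
    (U : Set E) (hconv : IsL0Convex P U) (habs : IsL0Absorbent P U)
    (hbal : IsL0Balanced P U) (hconcat : IsConcatClosed P U)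
    (X : E) (c : Ω →ₘ[P] ℝ) (hc : IsGLB (gaugeSet P U X) c) :
    ((∀ᵐ ω ∂P, c ω < 1) → X ∈ U) ∧ (X ∈ U → c ≤ 1) := by
  constructor
  · intro hclt
    classical
    set S := gaugeSet P U X with hSdef
    obtain ⟨Y₀, hY₀pos, hXY₀⟩ := habs X
    have hY₀S : Y₀ ∈ S := by
      refine ⟨ae_nonneg_le ?_, hXY₀⟩
      filter_upwards [hY₀pos, AEEqFun.coeFn_zero (β := ℝ) (μ := P)] with ω h1 h2
      rw [h2]; exact le_of_lt h1
    set T : (Ω →ₘ[P] ℝ) → Set Ω := fun Y => {ω | 1 ≤ Y ω} with hTdef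
    have hT : ∀ Y : Ω →ₘ[P] ℝ, MeasurableSet (T Y) :=
      fun Y => measurableSet_le measurable_const Y.measurable
    set δ : ENNReal := ⨅ Y : S, P (T Y) with hδdef
    have hδtop : δ ≠ ⊤ :=
      ne_top_of_le_ne_top (measure_ne_top P _) (iInf_le _ (⟨Y₀, hY₀S⟩ : S))
    haveI hSne : Nonempty S := ⟨⟨Y₀, hY₀S⟩⟩
    have hpick : ∀ k : ℕ, ∃ Y : S, P (T Y) < δ + ((k : ENNReal) + 1)⁻¹ := by
      intro k
      apply exists_lt_of_ciInf_lt
      exact ENNReal.lt_add_right hδtop (ENNReal.inv_ne_zero.mpr (by simp))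
    choose Ys hYs using hpick
    -- recursive minima
    have Hmin : ∀ (a : S) (k : ℕ), ∃ b : S,
        ∀ᵐ ω ∂P, (b : Ω →ₘ[P] ℝ) ω = min ((a : Ω →ₘ[P] ℝ) ω) ((Ys (k+1) : Ω →ₘ[P] ℝ) ω) := by
      intro a k
      obtain ⟨W, hWS, hWmin⟩ := min_mem_gaugeSet hconv a.2 (Ys (k+1)).2
      exact ⟨⟨W, hWS⟩, hWmin⟩
    choose F hF using Hmin
    let R : ℕ → S := fun n => Nat.rec (Ys 0) (fun k a => F a k) n
    let W : ℕ → Ω →ₘ[P] ℝ := fun n => (R n).1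
    have hWS : ∀ n, W n ∈ S := fun n => (R n).2
    have hWmin : ∀ k, ∀ᵐ ω ∂P, W (k+1) ω = min (W k ω) ((Ys (k+1) : Ω →ₘ[P] ℝ) ω) :=
      fun k => hF (R k) k
    have hWle : ∀ k, ∀ᵐ ω ∂P, W k ω ≤ (Ys k : Ω →ₘ[P] ℝ) ω := by
      intro k
      cases k with
      | zero => exact Eventually.of_forall (fun ω => le_rfl)
      | succ k =>
        filter_upwards [hWmin k] with ω h
        rw [h]; exact min_le_right _ _
    have hWanti : ∀ k, ∀ᵐ ω ∂P, W (k+1) ω ≤ W k ω := by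
      intro k
      filter_upwards [hWmin k] with ω h
      rw [h]; exact min_le_left _ _
    have hchain : ∀ᵐ ω ∂P, ∀ j k, j ≤ k → W k ω ≤ W j ω := by
      filter_upwards [ae_all_iff.mpr hWanti] with ω h j k hjk
      exact antitone_nat_of_succ_le (f := fun k => W k ω) h hjk
    -- the decreasing sets
    set Bs : ℕ → Set Ω := fun k => T (W k) with hBsdef
    have hBsmeas : ∀ k, MeasurableSet (Bs k) := fun k => hT (W k)
    set Binf : Set Ω := ⋂ k, Bs k with hBinfdef
    have hBinfmeas : MeasurableSet Binf := MeasurableSet.iInter hBsmeas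
    have hBδ : ∀ k, δ ≤ P (Bs k) := fun k => iInf_le _ (⟨W k, hWS k⟩ : S)
    set B' : ℕ → Set Ω := fun k => ⋂ j, ⋂ (_ : j ≤ k), Bs j with hB'def
    have hB'meas : ∀ k, MeasurableSet (B' k) :=
      fun k => MeasurableSet.iInter (fun j => MeasurableSet.iInter (fun _ => hBsmeas j))
    have hB'anti : Antitone B' := by
      intro a b hab
      simp only [hB'def]
      exact Set.iInter₂_mono' (fun j hj => ⟨j, le_trans hj hab, subset_rfl⟩)
    have hB'sub : ∀ k, B' k ⊆ Bs k := by
      intro k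
      simp only [hB'def]
      exact Set.iInter₂_subset (s := fun j (_ : j ≤ k) => Bs j) k le_rfl
    have hB'ae : ∀ k, (B' k : Set Ω) =ᵐ[P] (Bs k : Set Ω) := by
      intro k
      rw [Filter.eventuallyEq_set]
      filter_upwards [hchain] with ω h
      constructor
      · intro hω; exact hB'sub k hω
      · intro hω
        have hω' : (1:ℝ) ≤ W k ω := hω
        simp only [hB'def, Set.mem_iInter]
        intro j hj
        show (1:ℝ) ≤ W j ω
        exact le_trans hω' (h j k hj)
    have hiInterB' : (⋂ k, B' k) = Binf := by
      apply Set.Subset.antisymm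
      · have h1 : (⋂ k, B' k) ⊆ ⋂ k, Bs k := Set.iInter_mono fun k => hB'sub k
        rw [hBinfdef]
        exact h1
      · intro ω hω
        have hω' : ∀ j, ω ∈ Bs j := by
          rw [hBinfdef] at hω
          exact Set.mem_iInter.mp hω
        simp only [hB'def, Set.mem_iInter]
        intro k j _
        exact hω' j
    have hlim : ∀ T₀ : Set Ω, MeasurableSet T₀ →
        (∀ k, δ ≤ P (Bs k ∩ T₀)) → δ ≤ P (Binf ∩ T₀) := by
      intro T₀ hT₀ hk
      have hanti : Antitone (fun k => B' k ∩ T₀) :=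
        fun a b hab => Set.inter_subset_inter_left _ (hB'anti hab)
      have hinter : (⋂ k, B' k ∩ T₀) = Binf ∩ T₀ := by
        rw [← hiInterB', Set.iInter_inter]
      have hm := Antitone.measure_iInter hanti
        (fun k => ((hB'meas k).inter hT₀).nullMeasurableSet) ⟨0, measure_ne_top P _⟩
      rw [hinter] at hm
      rw [hm]
      refine le_iInf (fun k => ?_)
      rw [measure_congr ((hB'ae k).inter (Filter.EventuallyEq.refl _ T₀))]
      exact hk k
    have hPBinf_ge : δ ≤ P Binf := by
      have := hlim Set.univ MeasurableSet.univ (fun k => by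
        rw [Set.inter_univ]; exact hBδ k)
      rwa [Set.inter_univ] at this
    have hPBinf_le : δ ≤ P Binf → P Binf ≤ δ := by
      intro _
      refine ENNReal.le_of_forall_pos_le_add (fun ε hε _ => ?_)
      obtain ⟨n, hn⟩ := ENNReal.exists_inv_nat_lt
        (by exact_mod_cast hε.ne' : (ε : ENNReal) ≠ 0)
      have hsub : ∀ᵐ ω ∂P, ω ∈ Bs n → ω ∈ T (Ys n : Ω →ₘ[P] ℝ) := by
        filter_upwards [hWle n] with ω h hmem
        show (1:ℝ) ≤ (Ys n : Ω →ₘ[P] ℝ) ω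
        exact le_trans hmem h
      calc P Binf ≤ P (Bs n) := measure_mono (Set.iInter_subset _ n)
        _ ≤ P (T (Ys n : Ω →ₘ[P] ℝ)) := measure_mono_ae hsub
        _ ≤ δ + ((n : ENNReal) + 1)⁻¹ := le_of_lt (hYs n)
        _ ≤ δ + (n : ENNReal)⁻¹ := by
            gcongr
            exact le_self_add
        _ ≤ δ + ε := add_le_add_right (le_of_lt hn) δ
    have hPBle : P Binf ≤ δ := hPBinf_le hPBinf_ge
    by_cases hδ0 : δ = 0
    · -- concatenation
      have hPB0 : P Binf = 0 := le_antisymm (hδ0 ▸ hPBle) zero_le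
      have hBnm : ∀ᵐ ω ∂P, ω ∉ Binf := measure_eq_zero_iff_ae_notMem.mp hPB0
      set C' : ℕ → Set Ω := fun k => if k = 0 then (Bs 0)ᶜ ∪ Binf else (Bs k)ᶜ with hC'def
      have hC'meas : ∀ k, MeasurableSet (C' k) := by
        intro k
        simp only [hC'def]
        split
        · exact ((hBsmeas 0).compl).union hBinfmeas
        · exact (hBsmeas k).compl
      have hC'union : (⋃ k, C' k) = Set.univ := by
        ext ω
        simp only [Set.mem_univ, iff_true, Set.mem_iUnion]
        by_cases hω : ω ∈ Binf
        · exact ⟨0, by simp only [hC'def, if_pos rfl]; exact Or.inr hω⟩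
        · have : ¬ ∀ k, ω ∈ Bs k := by
            intro h; exact hω (Set.mem_iInter.mpr h)
          push_neg at this
          obtain ⟨k, hk⟩ := this
          by_cases h0 : k = 0
          · subst h0
            exact ⟨0, by simp only [hC'def, if_pos rfl]; exact Or.inl hk⟩
          · exact ⟨k, by simp only [hC'def, if_neg h0]; exact hk⟩
      set A : ℕ → Set Ω := disjointed C' with hAdef
      have hA : ∀ n, MeasurableSet (A n) := MeasurableSet.disjointed hC'meas
      have hdisj : Pairwise (Function.onFun Disjoint A) := disjoint_disjointed C'
      have hAunion : (⋃ n, A n) = Set.univ := by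
        rw [hAdef, iUnion_disjointed]; exact hC'union
      refine hconcat A hA hdisj hAunion X (fun n => ?_)
      obtain ⟨u, hu, hXu⟩ := Set.mem_smul_set.mp (hWS n).2
      set e : Ω →ₘ[P] ℝ := ind P (A n) (hA n) with hedef
      have habsle : |e * W n| ≤ 1 := by
        apply ae_nonneg_le
        filter_upwards [AEEqFun.coeFn_abs (e * W n), AEEqFun.coeFn_mul e (W n),
          ind_coe (A n) (hA n), AEEqFun.coeFn_one (β := ℝ) (μ := P),
          nonneg_ae (hWS n).1, hBnm] with ω h1 h2 h3 h4 h5 h6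
        simp only [Pi.mul_apply] at h2
        rw [h1, h2, h3, h4]
        by_cases hω : ω ∈ A n
        · have hωC' : ω ∈ C' n := by
            rw [hAdef] at hω
            exact disjointed_subset C' n hω
          have hωB : W n ω < 1 := by
            by_cases h0 : n = 0
            · subst h0
              simp only [hC'def, if_pos rfl] at hωC'
              rcases hωC' with h | h
              · exact lt_of_not_ge h
              · exact absurd h h6
            · simp only [hC'def, if_neg h0] at hωC'
              exact lt_of_not_ge hωC'
          rw [Set.indicator_of_mem hω, one_mul, abs_of_nonneg h5]
          exact le_of_lt hωB
        · rw [Set.indicator_of_notMem hω, zero_mul, abs_zero]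
          exact zero_le_one
      refine ⟨(e * W n) • u, hbal u hu (e * W n) habsle, ?_⟩
      have h7 : e • ((e * W n) • u) = (e * W n) • u := by
        rw [smul_smul, ← mul_assoc, ind_mul_self]
      rw [h7, ← hXu, smul_smul]
    · -- contradiction with c < 1 a.e.
      exfalso
      have hYB : ∀ Y ∈ S, ∀ᵐ ω ∂P, ω ∈ Binf → (1:ℝ) ≤ Y ω := by
        intro Y hY
        have hk : ∀ k, δ ≤ P (Bs k ∩ T Y) := by
          intro k
          obtain ⟨V, hVS, hVmin⟩ := min_mem_gaugeSet hconv (hWS k) hY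
          have hseteq : (T V : Set Ω) =ᵐ[P] (Bs k ∩ T Y : Set Ω) := by
            rw [Filter.eventuallyEq_set]
            filter_upwards [hVmin] with ω h
            show (1:ℝ) ≤ V ω ↔ ω ∈ Bs k ∩ T Y
            rw [h]
            constructor
            · intro hm
              exact ⟨le_trans hm (min_le_left _ _), le_trans hm (min_le_right _ _)⟩
            · intro hm
              exact le_min hm.1 hm.2
          calc δ ≤ P (T V) := iInf_le _ (⟨V, hVS⟩ : S)
            _ = P (Bs k ∩ T Y) := measure_congr hseteq
        have h1 : δ ≤ P (Binf ∩ T Y) := hlim (T Y) (hT Y) hk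
        have h2 : P (Binf ∩ T Y) + P (Binf \ T Y) = δ := by
          rw [measure_inter_add_diff Binf (hT Y)]
          exact le_antisymm hPBle hPBinf_ge
        have h3 : P (Binf \ T Y) = 0 := by
          by_contra h
          have hlt := lt_of_lt_of_le (ENNReal.lt_add_right hδtop h)
            (add_le_add_left h1 _)
          rw [h2] at hlt
          exact lt_irrefl _ hlt
        filter_upwards [measure_eq_zero_iff_ae_notMem.mp h3] with ω h hω
        by_contra hno
        exact h ⟨hω, hno⟩
      have hdmeas : AEStronglyMeasurable
          (fun ω => max (c ω) (Binf.indicator (fun _ => (1:ℝ)) ω)) P :=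
        (c.stronglyMeasurable.measurable.max
          (measurable_const.indicator hBinfmeas)).aestronglyMeasurable
      set d : Ω →ₘ[P] ℝ := AEEqFun.mk _ hdmeas with hddef
      have hdlb : d ∈ lowerBounds S := by
        intro Y hY
        apply ae_nonneg_le
        filter_upwards [AEEqFun.coeFn_mk _ hdmeas, le_ae (hc.1 hY),
          nonneg_ae hY.1, hYB Y hY] with ω h1 h2 h3 h4
        rw [h1]
        apply max_le h2
        by_cases hω : ω ∈ Binf
        · rw [Set.indicator_of_mem hω]
          exact h4 hω
        · rw [Set.indicator_of_notMem hω]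
          exact h3
      have hdc := hc.2 hdlb
      have hnm : ∀ᵐ ω ∂P, ω ∉ Binf := by
        filter_upwards [le_ae hdc, AEEqFun.coeFn_mk _ hdmeas, hclt] with ω h1 h2 h3 hω
        rw [h2] at h1
        have h5 : (1:ℝ) ≤ c ω := by
          rw [Set.indicator_of_mem hω] at h1
          exact le_trans (le_max_right _ _) h1
        linarith
      have : δ ≤ 0 := hPBinf_ge.trans_eq (measure_eq_zero_iff_ae_notMem.mpr hnm)
      exact hδ0 (le_antisymm this zero_le)
  · intro hX
    refine hc.1 ⟨?_, Set.mem_smul_set.mpr ⟨X, hX, one_smul _ X⟩⟩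
    apply ae_nonneg_le
    filter_upwards [AEEqFun.coeFn_zero (β := ℝ) (μ := P),
      AEEqFun.coeFn_one (β := ℝ) (μ := P)] with ω h1 h2
    rw [h1, h2]
    exact zero_le_one
end

section
/- Let E be a module over L⁰ and K ⊆ E an L⁰-convex, L⁰-absorbent and L⁰-balanced set, and let X ∈ E. If a ∈ L⁰ is a greatest lower bound (a.e. order) of {Y ∈ L⁰₊ : X ∈ Y•K}, then for every Z ∈ L⁰ the element |Z|·a is a greatest lower bound of {Y ∈ L⁰₊ : Z•X ∈ Y•K}; i.e., p_K(Z•X) = |Z|·p_K(X) for all Z ∈ L⁰. -/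
open MeasureTheory Filter Pointwise

variable {Ω : Type*} [MeasurableSpace Ω] (P : MeasureTheory.Measure Ω ) [IsProbabilityMeasure P]

section Helpers

set_option linter.unusedSectionVars false

variable {Ω : Type*} [MeasurableSpace Ω] {P : MeasureTheory.Measure Ω} [IsProbabilityMeasure P]

private lemma L0_le_iff {f g : Ω →ₘ[P] ℝ} : f ≤ g ↔ ∀ᵐ ω ∂P, f ω ≤ g ω :=
  AEEqFun.coeFn_le.symm

private lemma L0_mul_le_mul {c x y : Ω →ₘ[P] ℝ} (hc : 0 ≤ c) (h : x ≤ y) :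
    c * x ≤ c * y := by
  rw [L0_le_iff] at hc h ⊢
  filter_upwards [AEEqFun.coeFn_mul c x, AEEqFun.coeFn_mul c y,
    AEEqFun.coeFn_zero (β := ℝ) (μ := P), hc, h] with ω h1 h2 h3 h4 h5
  simp only [Pi.mul_apply, Pi.zero_apply] at *
  rw [h1, h2]
  exact mul_le_mul_of_nonneg_left h5 (by rw [h3] at h4; exact h4)

private lemma L0_add_le_add {x y z w : Ω →ₘ[P] ℝ} (h1 : x ≤ y) (h2 : z ≤ w) :
    x + z ≤ y + w := by
  rw [L0_le_iff] at h1 h2 ⊢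
  filter_upwards [AEEqFun.coeFn_add x z, AEEqFun.coeFn_add y w, h1, h2] with ω e1 e2 e3 e4
  simp only [Pi.add_apply] at *
  rw [e1, e2]; exact add_le_add e3 e4

private lemma L0_mul_nonneg {x y : Ω →ₘ[P] ℝ} (hx : 0 ≤ x) (hy : 0 ≤ y) : 0 ≤ x * y := by
  have := L0_mul_le_mul hx hy
  rwa [mul_zero] at this

private lemma L0_add_nonneg {x y : Ω →ₘ[P] ℝ} (hx : 0 ≤ x) (hy : 0 ≤ y) : 0 ≤ x + y := by
  have := L0_add_le_add hx hy
  rwa [add_zero] at this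

private lemma L0_sub_nonneg {x y : Ω →ₘ[P] ℝ} (h : x ≤ y) : 0 ≤ y - x := by
  rw [L0_le_iff] at h ⊢
  filter_upwards [AEEqFun.coeFn_sub y x, AEEqFun.coeFn_zero (β := ℝ) (μ := P), h]
    with ω e1 e2 e3
  simp only [Pi.sub_apply, Pi.zero_apply] at *
  rw [e1, e2]; linarith

end Helpers

/-- `p_K(Z • X) = |Z| · p_K(X)` for all `Z ∈ L⁰` when `K` is moreover
`L⁰`-balanced. -/
theorem stmt_9 {Ω : Type*} [MeasurableSpace Ω] (P : MeasureTheory.Measure Ω)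
    [IsProbabilityMeasure P]
    {E : Type*} [AddCommGroup E] [Module (Ω →ₘ[P] ℝ) E]
    (K : Set E) (hconv : IsL0Convex P K) (habs : IsL0Absorbent P K)
    (hbal : IsL0Balanced P K)
    (X : E) (a : Ω →ₘ[P] ℝ) (ha : IsGLB (gaugeSet P K X) a) :
    ∀ Z : Ω →ₘ[P] ℝ, IsGLB (gaugeSet P K (Z • X)) (|Z| * a) := by
  classical
  intro Z
  -- auxiliary elements: sign `s`, inverse-of-abs `u`
  have hsm : MeasureTheory.AEStronglyMeasurable (fun ω => if 0 ≤ Z ω then (1:ℝ) else -1) P :=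
    (Measurable.ite (measurableSet_le measurable_const Z.measurable)
      measurable_const measurable_const).aestronglyMeasurable
  have hum : MeasureTheory.AEStronglyMeasurable (fun ω => |Z ω|⁻¹) P :=
    (Z.measurable.abs.inv).aestronglyMeasurable
  obtain ⟨s, hs_def⟩ : ∃ s : Ω →ₘ[P] ℝ,
      s = AEEqFun.mk (fun ω => if 0 ≤ Z ω then (1:ℝ) else -1) hsm := ⟨_, rfl⟩
  obtain ⟨u, hu_def⟩ : ∃ u : Ω →ₘ[P] ℝ,
      u = AEEqFun.mk (fun ω => |Z ω|⁻¹) hum := ⟨_, rfl⟩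
  have hsc : ⇑s =ᵐ[P] fun ω => if 0 ≤ Z ω then (1:ℝ) else -1 := by
    rw [hs_def]; exact AEEqFun.coeFn_mk _ _
  have huc : ⇑u =ᵐ[P] fun ω => |Z ω|⁻¹ := by
    rw [hu_def]; exact AEEqFun.coeFn_mk _ _
  have hZa : ⇑|Z| =ᵐ[P] fun ω => |Z ω| := AEEqFun.coeFn_abs Z
  -- basic pointwise facts
  have hZ0 : (0 : Ω →ₘ[P] ℝ) ≤ |Z| := by
    rw [L0_le_iff]
    filter_upwards [hZa, AEEqFun.coeFn_zero (β := ℝ) (μ := P)] with ω e1 e2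
    rw [e1, e2]; exact abs_nonneg _
  have hu0 : (0 : Ω →ₘ[P] ℝ) ≤ u := by
    rw [L0_le_iff]
    filter_upwards [huc, AEEqFun.coeFn_zero (β := ℝ) (μ := P)] with ω e1 e2
    rw [e1, e2]; positivity
  have hs1 : |s| ≤ 1 := by
    rw [L0_le_iff]
    filter_upwards [AEEqFun.coeFn_abs s, hsc, AEEqFun.coeFn_one (β := ℝ) (μ := P)]
      with ω e1 e2 e3
    rw [e1, e3, e2, Pi.one_apply]
    split <;> simp
  have hsZ : s * |Z| = Z := by
    apply AEEqFun.ext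
    filter_upwards [AEEqFun.coeFn_mul s |Z|, hsc, hZa] with ω e1 e2 e3
    rw [e1, Pi.mul_apply, e2, e3]
    rcases le_or_gt 0 (Z ω) with h | h
    · rw [if_pos h, abs_of_nonneg h, one_mul]
    · rw [if_neg (not_le.mpr h), abs_of_neg h]; ring
  have hsZ' : s * Z = |Z| := by
    apply AEEqFun.ext
    filter_upwards [AEEqFun.coeFn_mul s Z, hsc, hZa] with ω e1 e2 e3
    rw [e1, Pi.mul_apply, e2, e3]
    rcases le_or_gt 0 (Z ω) with h | h
    · rw [if_pos h, abs_of_nonneg h, one_mul]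
    · rw [if_neg (not_le.mpr h), abs_of_neg h]; ring
  have hue0 : u * (|Z| * u) = u := by
    apply AEEqFun.ext
    filter_upwards [AEEqFun.coeFn_mul u (|Z| * u), AEEqFun.coeFn_mul |Z| u, huc, hZa]
      with ω e1 e2 e3 e4
    rw [e1, Pi.mul_apply, e2, Pi.mul_apply, e3, e4]
    rcases eq_or_ne (Z ω) 0 with h | h
    · simp [h]
    · rw [mul_inv_cancel₀ (abs_ne_zero.mpr h), mul_one]
  have hZe0 : |Z| * (|Z| * u) = |Z| := by
    apply AEEqFun.ext
    filter_upwards [AEEqFun.coeFn_mul |Z| (|Z| * u), AEEqFun.coeFn_mul |Z| u, huc, hZa]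
      with ω e1 e2 e3 e4
    rw [e1, Pi.mul_apply, e2, Pi.mul_apply, e3, e4]
    rcases eq_or_ne (Z ω) 0 with h | h
    · simp [h]
    · rw [mul_inv_cancel₀ (abs_ne_zero.mpr h), mul_one]
  have he10 : |Z| * u ≤ 1 := by
    rw [L0_le_iff]
    filter_upwards [AEEqFun.coeFn_mul |Z| u, huc, hZa, AEEqFun.coeFn_one (β := ℝ) (μ := P)]
      with ω e1 e2 e3 e4
    rw [e1, Pi.mul_apply, e2, e3, e4, Pi.one_apply]
    rcases eq_or_ne (Z ω) 0 with h | h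
    · simp [h]
    · rw [mul_inv_cancel₀ (abs_ne_zero.mpr h)]
  obtain ⟨e, he_def⟩ : ∃ e : Ω →ₘ[P] ℝ, e = |Z| * u := ⟨_, rfl⟩
  have hue : u * e = u := by rw [he_def]; exact hue0
  have hZe : |Z| * e = |Z| := by rw [he_def]; exact hZe0
  have he1 : e ≤ 1 := by rw [he_def]; exact he10
  have he0 : (0 : Ω →ₘ[P] ℝ) ≤ e := by rw [he_def]; exact L0_mul_nonneg hZ0 hu0
  have hee : e * e = e := by rw [he_def]; linear_combination |Z| * hue0
  have h1e0 : (0 : Ω →ₘ[P] ℝ) ≤ 1 - e := L0_sub_nonneg he1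
  have hu1e : u * (1 - e) = 0 := by linear_combination -hue
  have heY_le : ∀ Y : Ω →ₘ[P] ℝ, 0 ≤ Y → e * Y ≤ Y := by
    intro Y hY0
    have := L0_mul_le_mul hY0 he1
    rw [mul_one, mul_comm] at this
    exact this
  -- Step A : scaling gauge-set elements
  have stepA : ∀ Y ∈ gaugeSet P K X, |Z| * Y ∈ gaugeSet P K (Z • X) := by
    rintro Y ⟨hY0, hmem⟩
    obtain ⟨k, hkK, hk⟩ := hmem
    have hk : Y • k = X := hk
    refine ⟨L0_mul_nonneg hZ0 hY0, ?_⟩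
    refine ⟨s • k, hbal k hkK s hs1, ?_⟩
    have hmul : |Z| * Y * s = Z * Y := by
      rw [mul_right_comm, mul_comm |Z| s, hsZ]
    calc (|Z| * Y) • s • k = (|Z| * Y * s) • k := smul_smul _ _ _
      _ = (Z * Y) • k := by rw [hmul]
      _ = Z • Y • k := mul_smul _ _ _
      _ = Z • X := by rw [hk]
  constructor
  · -- |Z| * a is a lower bound of gaugeSet P K (Z • X)
    rintro Y ⟨hY0, hmem⟩
    obtain ⟨k, hkK, hk⟩ := hmem
    have hk : Y • k = Z • X := hk
    obtain ⟨W, hWpp, hWmem⟩ := habs X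
    obtain ⟨m, hmK, hm⟩ := hWmem
    have hm : W • m = X := hm
    have hW0 : (0 : Ω →ₘ[P] ℝ) ≤ W := by
      rw [L0_le_iff]
      filter_upwards [AEEqFun.coeFn_zero (β := ℝ) (μ := P), hWpp] with ω e1 e2
      rw [e1]; exact le_of_lt e2
    obtain ⟨k', hk'_def⟩ : ∃ k' : E, k' = s • k := ⟨_, rfl⟩
    have hk'K : k' ∈ K := by rw [hk'_def]; exact hbal k hkK s hs1
    have hsue : s * u * Z = e := by
      rw [he_def, mul_comm s u, mul_assoc, hsZ', mul_comm u |Z|]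
    have heX : e • X = (u * Y) • k' := by
      calc e • X = (s * u * Z) • X := by rw [hsue]
        _ = (s * u) • Z • X := mul_smul _ _ _
        _ = (s * u) • Y • k := by rw [hk]
        _ = (s * u * Y) • k := smul_smul _ _ _
        _ = (u * Y * s) • k := by rw [show s * u * Y = u * Y * s from by ring]
        _ = (u * Y) • s • k := (smul_smul _ _ _).symm
        _ = (u * Y) • k' := by rw [← hk'_def]
    have h1eX : (1 - e) • X = ((1 - e) * W) • m := by
      rw [mul_smul, hm]
    obtain ⟨V, hV_def⟩ : ∃ V : Ω →ₘ[P] ℝ, V = u * Y + (1 - e) * W := ⟨_, rfl⟩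
    have hV0 : (0 : Ω →ₘ[P] ℝ) ≤ V := by
      rw [hV_def]
      exact L0_add_nonneg (L0_mul_nonneg hu0 hY0) (L0_mul_nonneg h1e0 hW0)
    have hVe : V * e = u * Y := by linear_combination e * hV_def + Y * hue - W * hee
    have hV1e : V * (1 - e) = (1 - e) * W := by
      linear_combination (1 - e) * hV_def + Y * hu1e + W * hee
    have hnK : e • k' + (1 - e) • m ∈ K := hconv k' hk'K m hmK e he0 he1
    have hVn : V • (e • k' + (1 - e) • m) = X := by
      calc V • (e • k' + (1 - e) • m)
          = V • e • k' + V • (1 - e) • m := smul_add _ _ _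
        _ = (V * e) • k' + (V * (1 - e)) • m := by rw [smul_smul, smul_smul]
        _ = (u * Y) • k' + ((1 - e) * W) • m := by rw [hVe, hV1e]
        _ = e • X + (1 - e) • X := by rw [← heX, ← h1eX]
        _ = (e + (1 - e)) • X := (add_smul _ _ _).symm
        _ = X := by rw [show e + (1 - e) = (1 : Ω →ₘ[P] ℝ) from by ring, one_smul]
    have hVmem : V ∈ gaugeSet P K X := ⟨hV0, _, hnK, hVn⟩
    have haV : a ≤ V := ha.1 hVmem
    have h2 : |Z| * V = e * Y := by
      linear_combination |Z| * hV_def + (-Y) * he_def + (-W) * hZe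
    calc |Z| * a ≤ |Z| * V := L0_mul_le_mul hZ0 haV
      _ = e * Y := h2
      _ ≤ Y := heY_le Y hY0
  · -- greatest lower bound
    intro b hb
    obtain ⟨W, hWpp, hWmem⟩ := habs X
    have hW0 : (0 : Ω →ₘ[P] ℝ) ≤ W := by
      rw [L0_le_iff]
      filter_upwards [AEEqFun.coeFn_zero (β := ℝ) (μ := P), hWpp] with ω e1 e2
      rw [e1]; exact le_of_lt e2
    have hWgauge : W ∈ gaugeSet P K X := ⟨hW0, hWmem⟩
    have hub_lb : u * b ∈ lowerBounds (gaugeSet P K X) := by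
      intro Y hY
      have h1 : b ≤ |Z| * Y := hb (stepA Y hY)
      have h2 : u * b ≤ u * (|Z| * Y) := L0_mul_le_mul hu0 h1
      have h3 : u * (|Z| * Y) = e * Y := by rw [← mul_assoc, mul_comm u |Z|, ← he_def]
      rw [h3] at h2
      exact le_trans h2 (heY_le Y hY.1)
    have hub_a : u * b ≤ a := ha.2 hub_lb
    have h4 : |Z| * (u * b) ≤ |Z| * a := L0_mul_le_mul hZ0 hub_a
    have h5 : |Z| * (u * b) = e * b := by rw [← mul_assoc, ← he_def]
    rw [h5] at h4
    have hbW : b ≤ |Z| * W := hb (stepA W hWgauge)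
    have h6 : (1 - e) * b ≤ (1 - e) * (|Z| * W) := L0_mul_le_mul h1e0 hbW
    have h7 : (1 - e) * (|Z| * W) = 0 := by linear_combination (-W) * hZe
    rw [h7] at h6
    have h9 : e * b + (1 - e) * b ≤ |Z| * a + 0 := L0_add_le_add h4 h6
    have h8 : e * b + (1 - e) * b = b := by ring
    rwa [h8, add_zero] at h9
end

section
/- For every ε ∈ L⁰₊₊, the set U_ε := {Y ∈ L⁰ : ∃ finite I ⊆ ℕ such that |Y·1_{A_i}| ≤ ε a.e. for all i ∉ I} is L⁰-convex, L⁰-absorbent and L⁰-balanced as a subset of the L⁰-module L⁰. -/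
open MeasureTheory Filter Pointwise

variable {Ω : Type*} [MeasurableSpace Ω] (P : MeasureTheory.Measure Ω ) [IsProbabilityMeasure P]

/-- The set `U_ε` of the counterexample: `Y ∈ U_ε` iff `|Y·1_{A_i}| ≤ ε` a.e. for all `i`
outside some finite set `I ⊆ ℕ`. -/
def Uset (A : ℕ → Set Ω) (hA : ∀ n, MeasurableSet (A n)) (ε : Ω →ₘ[P] ℝ) :
    Set (Ω →ₘ[P] ℝ) :=
  {Y : Ω →ₘ[P] ℝ | ∃ I : Finset ℕ, ∀ i ∉ I, |Y * ind P (A i) (hA i)| ≤ ε}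


section Aux

variable {Ω : Type*} [MeasurableSpace Ω] (P : MeasureTheory.Measure Ω) [IsProbabilityMeasure P]

lemma abs_le_iff_ae (f g : Ω →ₘ[P] ℝ) : |f| ≤ g ↔ ∀ᵐ ω ∂P, |f ω| ≤ g ω := by
  rw [← AEEqFun.coeFn_le]
  constructor
  · intro h
    filter_upwards [AEEqFun.coeFn_abs f, h] with ω h1 h2
    rw [← h1]; exact h2
  · intro h
    filter_upwards [AEEqFun.coeFn_abs f, h] with ω h1 h2
    rw [h1]; exact h2

lemma le_iff_ae (f g : Ω →ₘ[P] ℝ) : f ≤ g ↔ ∀ᵐ ω ∂P, f ω ≤ g ω := AEEqFun.coeFn_le.symm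

lemma coeFn_ind (A : Set Ω) (hA : MeasurableSet A) :
    ⇑(ind P A hA) =ᵐ[P] A.indicator fun _ => (1 : ℝ) :=
  AEEqFun.coeFn_mk _ _

lemma abs_ind_le (A : Set Ω) (hA : MeasurableSet A) :
    ∀ᵐ ω ∂P, |(ind P A hA) ω| ≤ 1 := by
  filter_upwards [coeFn_ind P A hA] with ω h
  rw [h]
  by_cases hω : ω ∈ A <;> simp [Set.indicator_apply, hω]

end Aux

/-- each `U_ε` is `L⁰`-convex, `L⁰`-absorbent and `L⁰`-balanced in the
`L⁰`-module `L⁰`. -/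
theorem stmt_11 {Ω : Type*} [MeasurableSpace Ω] (P : MeasureTheory.Measure Ω)
    [IsProbabilityMeasure P]
    (A : ℕ → Set Ω) (hA : ∀ n, MeasurableSet (A n))
    (hdisj : Pairwise (Function.onFun Disjoint A)) (hcover : (⋃ n, A n) = Set.univ)
    (hpos : ∀ n, 0 < P (A n))
    (ε : Ω →ₘ[P] ℝ) (hε : L0pp P ε) :
    IsL0Convex P (Uset P A hA ε) ∧ IsL0Absorbent P (Uset P A hA ε) ∧
      IsL0Balanced P (Uset P A hA ε) := by
  refine ⟨?_, ?_, ?_⟩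
  · -- convex
    rintro X₁ ⟨I₁, h₁⟩ X₂ ⟨I₂, h₂⟩ Y hY0 hY1
    refine ⟨I₁ ∪ I₂, fun i hi => ?_⟩
    have hi₁ : i ∉ I₁ := fun h => hi (Finset.mem_union_left _ h)
    have hi₂ : i ∉ I₂ := fun h => hi (Finset.mem_union_right _ h)
    have ha1' := (abs_le_iff_ae P _ _).mp (h₁ i hi₁)
    have ha2' := (abs_le_iff_ae P _ _).mp (h₂ i hi₂)
    rw [abs_le_iff_ae]
    rw [le_iff_ae] at hY0 hY1
    have e0 : ⇑(0 : Ω →ₘ[P] ℝ) =ᵐ[P] fun _ => (0:ℝ) := AEEqFun.coeFn_zero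
    have e1 : ⇑(1 : Ω →ₘ[P] ℝ) =ᵐ[P] fun _ => (1:ℝ) := AEEqFun.coeFn_one
    have hsm : Y • X₁ + (1 - Y) • X₂ = Y * X₁ + (1 - Y) * X₂ := by
      rw [smul_eq_mul, smul_eq_mul]
    rw [hsm]
    filter_upwards [ha1', ha2', hY0, hY1, e0, e1,
      AEEqFun.coeFn_mul (Y * X₁ + (1 - Y) * X₂) (ind P (A i) (hA i)),
      AEEqFun.coeFn_add (Y * X₁) ((1 - Y) * X₂),
      AEEqFun.coeFn_mul Y X₁, AEEqFun.coeFn_mul (1 - Y) X₂,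
      AEEqFun.coeFn_sub (1 : Ω →ₘ[P] ℝ) Y,
      AEEqFun.coeFn_mul X₁ (ind P (A i) (hA i)),
      AEEqFun.coeFn_mul X₂ (ind P (A i) (hA i))]
      with ω ha1 ha2 hy0 hy1 hz0 hz1 c1 c2 c3 c4 c5 c6 c7
    rw [c1]
    simp only [Pi.mul_apply, Pi.add_apply, Pi.sub_apply] at *
    rw [c2, c3, c4, c5, hz1]
    rw [hz0] at hy0; rw [hz1] at hy1
    rw [c6] at ha1; rw [c7] at ha2
    calc |(Y ω * X₁ ω + (1 - Y ω) * X₂ ω) * (ind P (A i) (hA i)) ω|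
        = |Y ω * (X₁ ω * (ind P (A i) (hA i)) ω)
            + (1 - Y ω) * (X₂ ω * (ind P (A i) (hA i)) ω)| := by ring_nf
      _ ≤ |Y ω * (X₁ ω * (ind P (A i) (hA i)) ω)|
            + |(1 - Y ω) * (X₂ ω * (ind P (A i) (hA i)) ω)| := abs_add_le _ _
      _ = Y ω * |X₁ ω * (ind P (A i) (hA i)) ω|
            + (1 - Y ω) * |X₂ ω * (ind P (A i) (hA i)) ω| := by
          rw [abs_mul (Y ω), abs_mul (1 - Y ω), abs_of_nonneg hy0,
            abs_of_nonneg (by linarith : (0:ℝ) ≤ 1 - Y ω)]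
      _ ≤ Y ω * ε ω + (1 - Y ω) * ε ω :=
          add_le_add (mul_le_mul_of_nonneg_left ha1 hy0)
            (mul_le_mul_of_nonneg_left ha2 (by linarith))
      _ = ε ω := by ring
  · -- absorbent
    intro X
    set f : Ω → ℝ := fun ω => ‖X ω‖ / ε ω ⊔ 1 with hf
    have hfm : MeasureTheory.AEStronglyMeasurable f P :=
      (((X.aestronglyMeasurable.aemeasurable.norm.div
        ε.aestronglyMeasurable.aemeasurable).sup aemeasurable_const).aestronglyMeasurable)
    have hf1 : ∀ ω, (1 : ℝ) ≤ f ω := fun ω => le_sup_right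
    have hf0 : ∀ ω, f ω ≠ 0 := fun ω => by have := hf1 ω; positivity
    set Y : Ω →ₘ[P] ℝ := AEEqFun.mk f hfm with hY
    set Z : Ω →ₘ[P] ℝ := AEEqFun.mk (fun ω => X ω / f ω)
      ((X.aestronglyMeasurable.aemeasurable.div hfm.aemeasurable).aestronglyMeasurable) with hZ
    have hYc : ⇑Y =ᵐ[P] f := AEEqFun.coeFn_mk _ _
    have hZc : ⇑Z =ᵐ[P] fun ω => X ω / f ω := AEEqFun.coeFn_mk _ _
    refine ⟨Y, ?_, ?_⟩
    · filter_upwards [hYc] with ω h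
      rw [h]; exact lt_of_lt_of_le one_pos (hf1 ω)
    · refine Set.mem_smul_set.mpr ⟨Z, ⟨∅, fun i _ => ?_⟩, ?_⟩
      · rw [abs_le_iff_ae]
        filter_upwards [hε, hZc, abs_ind_le P (A i) (hA i),
          AEEqFun.coeFn_mul Z (ind P (A i) (hA i))] with ω hεω hzω hiω hc
        rw [hc]
        simp only [Pi.mul_apply]
        rw [abs_mul, hzω]
        have hzabs : |X ω / f ω| ≤ ε ω := by
          rw [abs_div, abs_of_pos (lt_of_lt_of_le one_pos (hf1 ω)),
            div_le_iff₀ (lt_of_lt_of_le one_pos (hf1 ω))]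
          calc |X ω| = ε ω * (|X ω| / ε ω) := by
                rw [mul_div_cancel₀ _ (ne_of_gt hεω)]
            _ ≤ ε ω * (‖X ω‖ / ε ω) := by rw [Real.norm_eq_abs]
            _ ≤ ε ω * f ω := by gcongr; exact le_sup_left
        simpa using mul_le_mul hzabs hiω (abs_nonneg _)
          ((abs_nonneg _).trans hzabs)
      · rw [smul_eq_mul]
        apply AEEqFun.ext
        filter_upwards [AEEqFun.coeFn_mul Y Z, hYc, hZc] with ω h1 h2 h3
        rw [h1]
        simp only [Pi.mul_apply]
        rw [h2, h3, mul_div_cancel₀ _ (hf0 ω)]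
  · -- balanced
    rintro X ⟨I, hI⟩ Y hY
    refine ⟨I, fun i hi => ?_⟩
    have hX' := (abs_le_iff_ae P _ _).mp (hI i hi)
    rw [abs_le_iff_ae] at hY ⊢
    have e1 : ⇑(1 : Ω →ₘ[P] ℝ) =ᵐ[P] fun _ => (1:ℝ) := AEEqFun.coeFn_one
    rw [smul_eq_mul]
    filter_upwards [hX', hY, e1,
      AEEqFun.coeFn_mul (Y * X) (ind P (A i) (hA i)),
      AEEqFun.coeFn_mul Y X,
      AEEqFun.coeFn_mul X (ind P (A i) (hA i))] with ω h1 h2 h3 c1 c2 c3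
    rw [c1]
    simp only [Pi.mul_apply] at c1 c2 c3 ⊢
    rw [c3] at h1
    rw [c2]
    calc |Y ω * X ω * (ind P (A i) (hA i)) ω|
        = |Y ω| * |X ω * (ind P (A i) (hA i)) ω| := by rw [mul_assoc, abs_mul]
      _ ≤ 1 * ε ω := mul_le_mul (h3 ▸ h2) h1 (abs_nonneg _) zero_le_one
      _ = ε ω := one_mul _
end
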